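/- Let C : ℝ^{2n} → ℝ (with three indices C_{ijk}) be a totally symmetric 3-tensor on ℝ^{2n} and J the standard complex structure with J² = -Id. Suppose C_{ijs} J^i_p J^j_q = C_{pqs} for all p, q, s. Then C = 0. -/
import Mathlib


/-- The matrix entries `J^i_k` of the standard complex structure on `ℝ^{2n}`:
`J^i_k = δ^i_{k+n}` for `k ≤ n` and `J^i_k = -δ^i_{k-n}` for `k > n`; it satisfies
`J^i_k J^k_j = -δ^i_j`. -/
def Jmat (n : ℕ) (i k : Fin (2 * n)) : ℝ :=
  if (k : ℕ) < n then (if (i : ℕ) = (k : ℕ) + n then 1 else 0)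
  else (if (i : ℕ) + n = (k : ℕ) then -1 else 0)

/-- The permutation `p ↦ p ± n` underlying `J`. -/
def sigJ (n : ℕ) (p : Fin (2 * n)) : Fin (2 * n) :=
  if h : (p : ℕ) < n then ⟨(p : ℕ) + n, by omega⟩ else ⟨(p : ℕ) - n, by have := p.isLt; omega⟩

/-- The sign of the nonzero entry of `J` in column `p`. -/
def epsJ (n : ℕ) (p : Fin (2 * n)) : ℝ :=
  if (p : ℕ) < n then 1 else -1

lemma Jmat_eq (n : ℕ) (i p : Fin (2 * n)) :
    Jmat n i p = if i = sigJ n p then epsJ n p else 0 := by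
  unfold Jmat sigJ epsJ
  by_cases hp : (p : ℕ) < n
  · simp only [if_pos hp, dif_pos hp, Fin.ext_iff]
  · simp only [if_neg hp, dif_neg hp, Fin.ext_iff]
    have : (i : ℕ) + n = (p : ℕ) ↔ (i : ℕ) = (p : ℕ) - n := by omega
    simp [this]

lemma sigJ_sigJ (n : ℕ) (p : Fin (2 * n)) : sigJ n (sigJ n p) = p := by
  unfold sigJ
  by_cases hp : (p : ℕ) < n
  · simp only [dif_pos hp]
    have h2 : ¬ ((p : ℕ) + n < n) := by omega
    simp only [dif_neg h2, Fin.ext_iff]; omega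
  · simp only [dif_neg hp]
    have hlt : (p : ℕ) < 2 * n := p.isLt
    have h2 : (p : ℕ) - n < n := by omega
    simp only [dif_pos h2, Fin.ext_iff]; omega

lemma epsJ_sigJ (n : ℕ) (p : Fin (2 * n)) : epsJ n (sigJ n p) = - epsJ n p := by
  unfold sigJ epsJ
  by_cases hp : (p : ℕ) < n
  · have h2 : ¬ ((p : ℕ) + n < n) := by omega
    simp [hp, h2]
  · have hlt : (p : ℕ) < 2 * n := p.isLt
    have h2 : (p : ℕ) - n < n := by omega
    simp [hp, h2]

lemma epsJ_mul_self (n : ℕ) (p : Fin (2 * n)) : epsJ n p * epsJ n p = 1 := by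
  unfold epsJ; by_cases hp : (p : ℕ) < n <;> simp [hp]

/-- A totally symmetric 3-tensor `C` on `ℝ^{2n}` satisfying the `J`-invariance
`C_{ijs} J^i_p J^j_q = C_{pqs}` in its first two slots must vanish. -/
theorem symmetric_J_invariant_tensor_vanishes (n : ℕ)
    (C : Fin (2 * n) → Fin (2 * n) → Fin (2 * n) → ℝ)
    (hsym₁ : ∀ i j k, C i j k = C j i k)
    (hsym₂ : ∀ i j k, C i j k = C i k j)
    (hJ : ∀ p q s, (∑ i, ∑ j, C i j s * Jmat n i p * Jmat n j q) = C p q s) :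
    ∀ i j k, C i j k = 0 := by
  -- collapse the sums
  have hJ' : ∀ p q s, epsJ n p * epsJ n q * C (sigJ n p) (sigJ n q) s = C p q s := by
    intro p q s
    have := hJ p q s
    simp only [Jmat_eq, mul_ite, ite_mul, zero_mul, mul_zero,
      Finset.sum_ite_eq', Finset.mem_univ, if_true] at this
    linarith [this]
  -- invariance in slots (1,3)
  have hJ13 : ∀ p q s, epsJ n p * epsJ n s * C (sigJ n p) q (sigJ n s) = C p q s := by
    intro p q s
    calc epsJ n p * epsJ n s * C (sigJ n p) q (sigJ n s)
        = epsJ n p * epsJ n s * C (sigJ n p) (sigJ n s) q := by rw [hsym₂]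
      _ = C p s q := hJ' p s q
      _ = C p q s := (hsym₂ p q s).symm
  -- invariance in slots (2,3)
  have hJ23 : ∀ p q s, epsJ n q * epsJ n s * C p (sigJ n q) (sigJ n s) = C p q s := by
    intro p q s
    calc epsJ n q * epsJ n s * C p (sigJ n q) (sigJ n s)
        = epsJ n q * epsJ n s * C (sigJ n q) p (sigJ n s) := by rw [hsym₁]
      _ = C q p s := hJ13 q p s
      _ = C p q s := (hsym₁ p q s).symm
  intro p q s
  have h1 := hJ' p q s
  have h2 := hJ23 (sigJ n p) (sigJ n q) s
  rw [sigJ_sigJ, epsJ_sigJ] at h2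
  have h3 := hJ13 p q s
  have hq := epsJ_mul_self n q
  linear_combination (-1/2 : ℝ) * h1 - (epsJ n p * epsJ n q / 2) * h2 - (1/2 : ℝ) * h3
    - (epsJ n p * epsJ n s * C (sigJ n p) q (sigJ n s) / 2) * hq
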